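/- (Proposition 4.1, asymptotics of the algebraic two-soliton in the k2-frame) With F1(x,t) = A1(x,t)/B1(x,t) and F3(x,t) = A2(x,t)/B2(x,t) as in the context, for every X2 ∈ ℝ the function t ↦ F1(X2 + t/k2⁴, t) tends to 4k2²/(1 + 4k2⁴·X2²) as t → +∞ and as t → −∞, and the function t ↦ F3(X2 + t/k2⁴, t) tends to 4/(k2²·(1 + 4k2⁴·X2²)) as t → +∞ and as t → −∞. -/

import Mathlib

open Real Filter

noncomputable section AlgebraicTwoSoliton

/-- Phase `θ1 = −(t + k1⁴x)/k1²`. -/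
def th1 (k1 : ℝ) (p : ℝ × ℝ) : ℝ := -(p.2 + k1 ^ 4 * p.1) / k1 ^ 2

/-- Phase `θ2 = −(t + k2⁴x)/k2²`. -/
def th2 (k2 : ℝ) (p : ℝ × ℝ) : ℝ := -(p.2 + k2 ^ 4 * p.1) / k2 ^ 2

def M1 (k1 k2 : ℝ) (p : ℝ × ℝ) : ℝ :=
  2 * k2 ^ 3 * (k1 ^ 2 - k2 ^ 2) * (k1 ^ 4 * p.1 - p.2)

def M2 (k1 k2 : ℝ) : ℝ := -(k1 ^ 2 * k2 ^ 3 * (3 * k1 ^ 2 + k2 ^ 2))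

def M3 (k1 k2 : ℝ) (p : ℝ × ℝ) : ℝ :=
  2 * k1 ^ 3 * (k1 ^ 2 - k2 ^ 2) * (k2 ^ 4 * p.1 - p.2)

def M4 (k1 k2 : ℝ) : ℝ := k1 ^ 3 * k2 ^ 2 * (k1 ^ 2 + 3 * k2 ^ 2)

def M5 (k1 k2 : ℝ) (p : ℝ × ℝ) : ℝ :=
  2 * (k1 ^ 2 - k2 ^ 2) ^ 2 * (k1 ^ 2 + k2 ^ 2) * (k1 ^ 2 * k2 ^ 2 * p.1 - p.2)

def M6 (k1 k2 : ℝ) (p : ℝ × ℝ) : ℝ :=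
  k1 ^ 6 * k2 ^ 2 + 6 * k1 ^ 4 * k2 ^ 4 + k1 ^ 2 * k2 ^ 6
    - 4 * (k1 ^ 2 - k2 ^ 2) ^ 2 * p.2 ^ 2
    + 4 * (k1 ^ 2 - k2 ^ 2) ^ 2 * (k1 ^ 4 + k2 ^ 4) * p.2 * p.1
    - 4 * k1 ^ 4 * k2 ^ 4 * (k1 ^ 2 - k2 ^ 2) ^ 2 * p.1 ^ 2

def N1 (k1 k2 : ℝ) (p : ℝ × ℝ) : ℝ :=
  2 * k1 * (k1 ^ 2 - k2 ^ 2) * (k2 ^ 4 * p.1 - p.2)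

def N2 (k1 k2 : ℝ) : ℝ := 3 * k1 ^ 3 * k2 ^ 2 + k1 * k2 ^ 4

def N3 (k1 k2 : ℝ) (p : ℝ × ℝ) : ℝ :=
  2 * k2 * (k1 ^ 2 - k2 ^ 2) * (k1 ^ 4 * p.1 - p.2)

def N4 (k1 k2 : ℝ) : ℝ := -(k1 ^ 4 * k2) - 3 * k1 ^ 2 * k2 ^ 3

def N5 (k1 k2 : ℝ) (p : ℝ × ℝ) : ℝ :=
  2 * (k1 ^ 2 - k2 ^ 2) ^ 2 * (k1 ^ 2 + k2 ^ 2) * (k1 ^ 2 * k2 ^ 2 * p.1 - p.2)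

def N6 (k1 k2 : ℝ) (p : ℝ × ℝ) : ℝ :=
  -(k1 ^ 6 * k2 ^ 2) - 6 * k1 ^ 4 * k2 ^ 4 - k1 ^ 2 * k2 ^ 6
    + 4 * (k1 ^ 2 - k2 ^ 2) ^ 2 * p.2 ^ 2
    - 4 * (k1 ^ 2 - k2 ^ 2) ^ 2 * (k1 ^ 4 + k2 ^ 4) * p.2 * p.1
    + 4 * k1 ^ 4 * k2 ^ 4 * (k1 ^ 2 - k2 ^ 2) ^ 2 * p.1 ^ 2

/-- Numerator of the squared envelope `|q1|²`. -/
def A1 (k1 k2 : ℝ) (p : ℝ × ℝ) : ℝ :=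
  4 * (k1 ^ 2 - k2 ^ 2) ^ 2 *
    ((M1 k1 k2 p * cos (th1 k1 p) - M2 k1 k2 * sin (th1 k1 p)
        + M3 k1 k2 p * cos (th2 k2 p) - M4 k1 k2 * sin (th2 k2 p)) ^ 2
      + (M1 k1 k2 p * sin (th1 k1 p) + M2 k1 k2 * cos (th1 k1 p)
        + M3 k1 k2 p * sin (th2 k2 p) + M4 k1 k2 * cos (th2 k2 p)) ^ 2)

/-- Denominator of the squared envelope `|q1|²`. -/
def B1 (k1 k2 : ℝ) (p : ℝ × ℝ) : ℝ :=
  (M5 k1 k2 p - 4 * k1 ^ 5 * k2 ^ 3 * sin (th2 k2 p - th1 k1 p)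
      + 4 * k1 ^ 3 * k2 ^ 5 * sin (th2 k2 p - th1 k1 p)) ^ 2
    + (M6 k1 k2 p - 4 * k1 ^ 5 * k2 ^ 3 * cos (th2 k2 p - th1 k1 p)
      - 4 * k1 ^ 3 * k2 ^ 5 * cos (th2 k2 p - th1 k1 p)) ^ 2

/-- Numerator of the squared envelope `|q3|²`. -/
def A2 (k1 k2 : ℝ) (p : ℝ × ℝ) : ℝ :=
  4 * (k1 ^ 2 - k2 ^ 2) ^ 2 *
    ((N1 k1 k2 p * cos (th1 k1 p) + N2 k1 k2 * sin (th1 k1 p)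
        + N3 k1 k2 p * cos (th2 k2 p) + N4 k1 k2 * sin (th2 k2 p)) ^ 2
      + (-(N1 k1 k2 p) * sin (th1 k1 p) + N2 k1 k2 * cos (th1 k1 p)
        - N3 k1 k2 p * sin (th2 k2 p) + N4 k1 k2 * cos (th2 k2 p)) ^ 2)

/-- Denominator of the squared envelope `|q3|²`. -/
def B2 (k1 k2 : ℝ) (p : ℝ × ℝ) : ℝ :=
  (N5 k1 k2 p + 4 * k1 ^ 5 * k2 ^ 3 * sin (th1 k1 p - th2 k2 p)
      - 4 * k1 ^ 3 * k2 ^ 5 * sin (th1 k1 p - th2 k2 p)) ^ 2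
    + (N6 k1 k2 p + 4 * k1 ^ 5 * k2 ^ 3 * cos (th1 k1 p - th2 k2 p)
      + 4 * k1 ^ 3 * k2 ^ 5 * cos (th1 k1 p - th2 k2 p)) ^ 2

/-- The squared envelope `|q1|² = A1/B1` of the algebraic two-soliton. -/
def F1 (k1 k2 : ℝ) (p : ℝ × ℝ) : ℝ := A1 k1 k2 p / B1 k1 k2 p

/-- The squared envelope `|q3|² = A2/B2` of the algebraic two-soliton. -/
def F3 (k1 k2 : ℝ) (p : ℝ × ℝ) : ℝ := A2 k1 k2 p / B2 k1 k2 p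

end AlgebraicTwoSoliton

namespace NMTaux
open Real Filter

lemma abs_mul_sin_le (a θ : ℝ) : |a * Real.sin θ| ≤ |a| := by
  rw [abs_mul]
  exact mul_le_of_le_one_right (abs_nonneg a) (Real.abs_sin_le_one θ)

lemma abs_mul_cos_le (a θ : ℝ) : |a * Real.cos θ| ≤ |a| := by
  rw [abs_mul]
  exact mul_le_of_le_one_right (abs_nonneg a) (Real.abs_cos_le_one θ)

lemma abs_cos_mul_le' (θ w S : ℝ) (h : |w| ≤ S) : |Real.cos θ * w| ≤ S := by
  rw [abs_mul]
  calc |Real.cos θ| * |w| ≤ 1 * S :=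
        mul_le_mul (Real.abs_cos_le_one θ) h (abs_nonneg _) one_pos.le
    _ = S := one_mul _

lemma abs_sin_mul_le' (θ w S : ℝ) (h : |w| ≤ S) : |Real.sin θ * w| ≤ S := by
  rw [abs_mul]
  calc |Real.sin θ| * |w| ≤ 1 * S :=
        mul_le_mul (Real.abs_sin_le_one θ) h (abs_nonneg _) one_pos.le
    _ = S := one_mul _

lemma sq_mul_sin_le (a θ : ℝ) : (a * Real.sin θ) ^ 2 ≤ a ^ 2 := by
  nlinarith [Real.sin_sq_le_one θ, sq_nonneg a, sq_nonneg (Real.sin θ)]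

lemma sq_mul_cos_le (a θ : ℝ) : (a * Real.cos θ) ^ 2 ≤ a ^ 2 := by
  nlinarith [Real.cos_sq_le_one θ, sq_nonneg a, sq_nonneg (Real.cos θ)]

set_option maxHeartbeats 1000000 in
lemma tendsto_inv_atBot_zero' : Tendsto (fun t : ℝ => t⁻¹) atBot (nhds 0) := by
  have h1 : Tendsto (fun t : ℝ => -t) atBot atTop := tendsto_neg_atBot_atTop
  have h2 := h1.inv_tendsto_atTop
  have h3 := h2.neg
  rw [neg_zero] at h3
  refine h3.congr fun t => ?_
  simp [inv_neg]

lemma shape_tendsto (l : Filter ℝ) (hinv : Tendsto (fun t : ℝ => t⁻¹) l (nhds 0))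
    (hne : ∀ᶠ t in l, t ≠ 0)
    (m1 c1 m2 c2 S1 S2 S3 : ℝ) (h1 h2 r : ℝ → ℝ)
    (hb1 : ∀ t, |h1 t| ≤ S1) (hb2 : ∀ t, |h2 t| ≤ S2) (hbr : ∀ t, |r t| ≤ S3) :
    Tendsto (fun t => ((m1*t+c1)^2 + (m2*t+c2)^2 + (m1*t+c1)*h1 t + (m2*t+c2)*h2 t + r t) / t^2)
      l (nhds (m1^2 + m2^2)) := by
  have hP1 : Tendsto (fun t : ℝ => m1 + c1 * t⁻¹) l (nhds m1) := by
    simpa using tendsto_const_nhds.add (hinv.const_mul c1)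
  have hP2 : Tendsto (fun t : ℝ => m2 + c2 * t⁻¹) l (nhds m2) := by
    simpa using tendsto_const_nhds.add (hinv.const_mul c2)
  have hbd1 : IsBoundedUnder (· ≤ ·) l (fun t => ‖h1 t‖) :=
    isBoundedUnder_of ⟨S1, fun t => by simpa using hb1 t⟩
  have hbd2 : IsBoundedUnder (· ≤ ·) l (fun t => ‖h2 t‖) :=
    isBoundedUnder_of ⟨S2, fun t => by simpa using hb2 t⟩
  have hbdr : IsBoundedUnder (· ≤ ·) l (fun t => ‖r t‖) :=
    isBoundedUnder_of ⟨S3, fun t => by simpa using hbr t⟩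
  have T3 : Tendsto (fun t => ((m1 + c1*t⁻¹) * t⁻¹) * h1 t) l (nhds 0) := by
    have h0 : Tendsto (fun t : ℝ => (m1 + c1*t⁻¹) * t⁻¹) l (nhds 0) := by
      simpa using hP1.mul hinv
    exact h0.zero_mul_isBoundedUnder_le hbd1
  have T4 : Tendsto (fun t => ((m2 + c2*t⁻¹) * t⁻¹) * h2 t) l (nhds 0) := by
    have h0 : Tendsto (fun t : ℝ => (m2 + c2*t⁻¹) * t⁻¹) l (nhds 0) := by
      simpa using hP2.mul hinv
    exact h0.zero_mul_isBoundedUnder_le hbd2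
  have T5 : Tendsto (fun t => (t⁻¹ * t⁻¹) * r t) l (nhds 0) := by
    have h0 : Tendsto (fun t : ℝ => t⁻¹ * t⁻¹) l (nhds 0) := by
      simpa using hinv.mul hinv
    exact h0.zero_mul_isBoundedUnder_le hbdr
  have T := ((((hP1.pow 2).add (hP2.pow 2)).add T3).add T4).add T5
  refine Tendsto.congr' ?_ (by simpa using T)
  filter_upwards [hne] with t ht
  field_simp

noncomputable def thA (k1 k2 X2 t : ℝ) : ℝ := th1 k1 (X2 + t / k2^4, t)
noncomputable def thB (k1 k2 X2 t : ℝ) : ℝ := th2 k2 (X2 + t / k2^4, t)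

noncomputable def wA (k1 k2 X2 t : ℝ) : ℝ :=
  -(M2 k1 k2) * Real.sin (thA k1 k2 X2 t)
    + 2*k1^3*(k1^2-k2^2)*k2^4*X2 * Real.cos (thB k1 k2 X2 t)
    + -(M4 k1 k2) * Real.sin (thB k1 k2 X2 t)

noncomputable def zA (k1 k2 X2 t : ℝ) : ℝ :=
  (M2 k1 k2) * Real.cos (thA k1 k2 X2 t)
    + 2*k1^3*(k1^2-k2^2)*k2^4*X2 * Real.sin (thB k1 k2 X2 t)
    + (M4 k1 k2) * Real.cos (thB k1 k2 X2 t)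

noncomputable def hA (k1 k2 X2 : ℝ) : ℝ → ℝ := fun t =>
  2*(Real.cos (thA k1 k2 X2 t) * wA k1 k2 X2 t + Real.sin (thA k1 k2 X2 t) * zA k1 k2 X2 t)

noncomputable def rA (k1 k2 X2 : ℝ) : ℝ → ℝ := fun t =>
  wA k1 k2 X2 t ^ 2 + zA k1 k2 X2 t ^ 2

noncomputable def wC (k1 k2 X2 t : ℝ) : ℝ :=
  2*k1*(k1^2-k2^2)*k2^4*X2 * Real.cos (thA k1 k2 X2 t)
    + (N2 k1 k2) * Real.sin (thA k1 k2 X2 t)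
    + (N4 k1 k2) * Real.sin (thB k1 k2 X2 t)

noncomputable def zC (k1 k2 X2 t : ℝ) : ℝ :=
  -(2*k1*(k1^2-k2^2)*k2^4*X2) * Real.sin (thA k1 k2 X2 t)
    + (N2 k1 k2) * Real.cos (thA k1 k2 X2 t)
    + (N4 k1 k2) * Real.cos (thB k1 k2 X2 t)

noncomputable def hC (k1 k2 X2 : ℝ) : ℝ → ℝ := fun t =>
  2*(Real.cos (thB k1 k2 X2 t) * wC k1 k2 X2 t + Real.sin (thB k1 k2 X2 t) * -(zC k1 k2 X2 t))

noncomputable def rC (k1 k2 X2 : ℝ) : ℝ → ℝ := fun t =>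
  wC k1 k2 X2 t ^ 2 + zC k1 k2 X2 t ^ 2

noncomputable def hBf1 (k1 k2 X2 : ℝ) : ℝ → ℝ := fun t =>
  2*((4*k1^3*k2^5 - 4*k1^5*k2^3) * Real.sin (thB k1 k2 X2 t - thA k1 k2 X2 t))

noncomputable def hBf2 (k1 k2 X2 : ℝ) : ℝ → ℝ := fun t =>
  2*(-(4*k1^5*k2^3 + 4*k1^3*k2^5) * Real.cos (thB k1 k2 X2 t - thA k1 k2 X2 t))

noncomputable def rB (k1 k2 X2 : ℝ) : ℝ → ℝ := fun t =>
  ((4*k1^3*k2^5 - 4*k1^5*k2^3) * Real.sin (thB k1 k2 X2 t - thA k1 k2 X2 t))^2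
    + ((4*k1^5*k2^3 + 4*k1^3*k2^5) * Real.cos (thB k1 k2 X2 t - thA k1 k2 X2 t))^2

noncomputable def hDf1 (k1 k2 X2 : ℝ) : ℝ → ℝ := fun t =>
  2*((4*k1^5*k2^3 - 4*k1^3*k2^5) * Real.sin (thA k1 k2 X2 t - thB k1 k2 X2 t))

noncomputable def hDf2 (k1 k2 X2 : ℝ) : ℝ → ℝ := fun t =>
  2*((4*k1^5*k2^3 + 4*k1^3*k2^5) * Real.cos (thA k1 k2 X2 t - thB k1 k2 X2 t))

noncomputable def rD (k1 k2 X2 : ℝ) : ℝ → ℝ := fun t =>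
  ((4*k1^5*k2^3 - 4*k1^3*k2^5) * Real.sin (thA k1 k2 X2 t - thB k1 k2 X2 t))^2
    + ((4*k1^5*k2^3 + 4*k1^3*k2^5) * Real.cos (thA k1 k2 X2 t - thB k1 k2 X2 t))^2

lemma wA_bound (k1 k2 X2 t : ℝ) :
    |wA k1 k2 X2 t| ≤ |(-(M2 k1 k2))| + |2*k1^3*(k1^2-k2^2)*k2^4*X2| + |(-(M4 k1 k2))| := by
  unfold wA
  exact (abs_add_three _ _ _).trans
    (add_le_add (add_le_add (abs_mul_sin_le _ _) (abs_mul_cos_le _ _)) (abs_mul_sin_le _ _))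

lemma zA_bound (k1 k2 X2 t : ℝ) :
    |zA k1 k2 X2 t| ≤ |M2 k1 k2| + |2*k1^3*(k1^2-k2^2)*k2^4*X2| + |M4 k1 k2| := by
  unfold zA
  exact (abs_add_three _ _ _).trans
    (add_le_add (add_le_add (abs_mul_cos_le _ _) (abs_mul_sin_le _ _)) (abs_mul_cos_le _ _))

lemma wC_bound (k1 k2 X2 t : ℝ) :
    |wC k1 k2 X2 t| ≤ |2*k1*(k1^2-k2^2)*k2^4*X2| + |N2 k1 k2| + |N4 k1 k2| := by
  unfold wC
  exact (abs_add_three _ _ _).trans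
    (add_le_add (add_le_add (abs_mul_cos_le _ _) (abs_mul_sin_le _ _)) (abs_mul_sin_le _ _))

lemma zC_bound (k1 k2 X2 t : ℝ) :
    |zC k1 k2 X2 t| ≤ |(-(2*k1*(k1^2-k2^2)*k2^4*X2))| + |N2 k1 k2| + |N4 k1 k2| := by
  unfold zC
  exact (abs_add_three _ _ _).trans
    (add_le_add (add_le_add (abs_mul_sin_le _ _) (abs_mul_cos_le _ _)) (abs_mul_cos_le _ _))

lemma hA_bound (k1 k2 X2 t : ℝ) :
    |hA k1 k2 X2 t| ≤ 2*((|(-(M2 k1 k2))| + |2*k1^3*(k1^2-k2^2)*k2^4*X2| + |(-(M4 k1 k2))|)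
      + (|M2 k1 k2| + |2*k1^3*(k1^2-k2^2)*k2^4*X2| + |M4 k1 k2|)) := by
  unfold hA
  rw [abs_mul, abs_two]
  have h := (abs_add_le (Real.cos (thA k1 k2 X2 t) * wA k1 k2 X2 t)
      (Real.sin (thA k1 k2 X2 t) * zA k1 k2 X2 t)).trans
    (add_le_add (abs_cos_mul_le' (thA k1 k2 X2 t) _ _ (wA_bound k1 k2 X2 t))
      (abs_sin_mul_le' (thA k1 k2 X2 t) _ _ (zA_bound k1 k2 X2 t)))
  linarith

lemma rA_bound (k1 k2 X2 t : ℝ) :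
    |rA k1 k2 X2 t| ≤ (|(-(M2 k1 k2))| + |2*k1^3*(k1^2-k2^2)*k2^4*X2| + |(-(M4 k1 k2))|)^2
      + (|M2 k1 k2| + |2*k1^3*(k1^2-k2^2)*k2^4*X2| + |M4 k1 k2|)^2 := by
  unfold rA
  rw [abs_of_nonneg (by positivity)]
  have h1 : wA k1 k2 X2 t ^ 2
      ≤ (|(-(M2 k1 k2))| + |2*k1^3*(k1^2-k2^2)*k2^4*X2| + |(-(M4 k1 k2))|)^2 := by
    rw [← sq_abs]; exact pow_le_pow_left₀ (abs_nonneg _) (wA_bound k1 k2 X2 t) 2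
  have h2 : zA k1 k2 X2 t ^ 2
      ≤ (|M2 k1 k2| + |2*k1^3*(k1^2-k2^2)*k2^4*X2| + |M4 k1 k2|)^2 := by
    rw [← sq_abs]; exact pow_le_pow_left₀ (abs_nonneg _) (zA_bound k1 k2 X2 t) 2
  exact add_le_add h1 h2

lemma hC_bound (k1 k2 X2 t : ℝ) :
    |hC k1 k2 X2 t| ≤ 2*((|2*k1*(k1^2-k2^2)*k2^4*X2| + |N2 k1 k2| + |N4 k1 k2|)
      + (|(-(2*k1*(k1^2-k2^2)*k2^4*X2))| + |N2 k1 k2| + |N4 k1 k2|)) := by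
  unfold hC
  rw [abs_mul, abs_two]
  have hz : |(-(zC k1 k2 X2 t))| ≤ |(-(2*k1*(k1^2-k2^2)*k2^4*X2))| + |N2 k1 k2| + |N4 k1 k2| := by
    rw [abs_neg]; exact zC_bound k1 k2 X2 t
  have h := (abs_add_le (Real.cos (thB k1 k2 X2 t) * wC k1 k2 X2 t)
      (Real.sin (thB k1 k2 X2 t) * -(zC k1 k2 X2 t))).trans
    (add_le_add (abs_cos_mul_le' (thB k1 k2 X2 t) _ _ (wC_bound k1 k2 X2 t))
      (abs_sin_mul_le' (thB k1 k2 X2 t) _ _ hz))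
  linarith

lemma rC_bound (k1 k2 X2 t : ℝ) :
    |rC k1 k2 X2 t| ≤ (|2*k1*(k1^2-k2^2)*k2^4*X2| + |N2 k1 k2| + |N4 k1 k2|)^2
      + (|(-(2*k1*(k1^2-k2^2)*k2^4*X2))| + |N2 k1 k2| + |N4 k1 k2|)^2 := by
  unfold rC
  rw [abs_of_nonneg (by positivity)]
  have h1 : wC k1 k2 X2 t ^ 2
      ≤ (|2*k1*(k1^2-k2^2)*k2^4*X2| + |N2 k1 k2| + |N4 k1 k2|)^2 := by
    rw [← sq_abs]; exact pow_le_pow_left₀ (abs_nonneg _) (wC_bound k1 k2 X2 t) 2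
  have h2 : zC k1 k2 X2 t ^ 2
      ≤ (|(-(2*k1*(k1^2-k2^2)*k2^4*X2))| + |N2 k1 k2| + |N4 k1 k2|)^2 := by
    rw [← sq_abs]; exact pow_le_pow_left₀ (abs_nonneg _) (zC_bound k1 k2 X2 t) 2
  exact add_le_add h1 h2

lemma hBf1_bound (k1 k2 X2 t : ℝ) :
    |hBf1 k1 k2 X2 t| ≤ 2*|4*k1^3*k2^5 - 4*k1^5*k2^3| := by
  unfold hBf1
  rw [abs_mul, abs_two]
  have := abs_mul_sin_le (4*k1^3*k2^5 - 4*k1^5*k2^3) (thB k1 k2 X2 t - thA k1 k2 X2 t)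
  linarith

lemma hBf2_bound (k1 k2 X2 t : ℝ) :
    |hBf2 k1 k2 X2 t| ≤ 2*|(-(4*k1^5*k2^3 + 4*k1^3*k2^5))| := by
  unfold hBf2
  rw [abs_mul, abs_two]
  have := abs_mul_cos_le (-(4*k1^5*k2^3 + 4*k1^3*k2^5)) (thB k1 k2 X2 t - thA k1 k2 X2 t)
  linarith

lemma rB_bound (k1 k2 X2 t : ℝ) :
    |rB k1 k2 X2 t| ≤ (4*k1^3*k2^5 - 4*k1^5*k2^3)^2 + (4*k1^5*k2^3 + 4*k1^3*k2^5)^2 := by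
  unfold rB
  rw [abs_of_nonneg (by positivity)]
  exact add_le_add (sq_mul_sin_le _ _) (sq_mul_cos_le _ _)

lemma hDf1_bound (k1 k2 X2 t : ℝ) :
    |hDf1 k1 k2 X2 t| ≤ 2*|4*k1^5*k2^3 - 4*k1^3*k2^5| := by
  unfold hDf1
  rw [abs_mul, abs_two]
  have := abs_mul_sin_le (4*k1^5*k2^3 - 4*k1^3*k2^5) (thA k1 k2 X2 t - thB k1 k2 X2 t)
  linarith

lemma hDf2_bound (k1 k2 X2 t : ℝ) :
    |hDf2 k1 k2 X2 t| ≤ 2*|4*k1^5*k2^3 + 4*k1^3*k2^5| := by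
  unfold hDf2
  rw [abs_mul, abs_two]
  have := abs_mul_cos_le (4*k1^5*k2^3 + 4*k1^3*k2^5) (thA k1 k2 X2 t - thB k1 k2 X2 t)
  linarith

lemma rD_bound (k1 k2 X2 t : ℝ) :
    |rD k1 k2 X2 t| ≤ (4*k1^5*k2^3 - 4*k1^3*k2^5)^2 + (4*k1^5*k2^3 + 4*k1^3*k2^5)^2 := by
  unfold rD
  rw [abs_of_nonneg (by positivity)]
  exact add_le_add (sq_mul_sin_le _ _) (sq_mul_cos_le _ _)

lemma hM1 (k1 k2 X2 : ℝ) (hk2 : k2 ≠ 0) (t : ℝ) :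
    M1 k1 k2 (X2 + t / k2^4, t)
      = (2*(k1^2-k2^2)*(k1^4-k2^4)/k2)*t + 2*k2^3*(k1^2-k2^2)*k1^4*X2 := by
  simp only [M1]; field_simp; ring

lemma hM3 (k1 k2 X2 : ℝ) (hk2 : k2 ≠ 0) (t : ℝ) :
    M3 k1 k2 (X2 + t / k2^4, t) = 2*k1^3*(k1^2-k2^2)*k2^4*X2 := by
  simp only [M3]; field_simp; ring

lemma hM5 (k1 k2 X2 : ℝ) (hk2 : k2 ≠ 0) (t : ℝ) :
    M5 k1 k2 (X2 + t / k2^4, t)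
      = (2*(k1^2-k2^2)^3*(k1^2+k2^2)/k2^2)*t
        + 2*(k1^2-k2^2)^2*(k1^2+k2^2)*k1^2*k2^2*X2 := by
  simp only [M5]; field_simp; ring

lemma hM6 (k1 k2 X2 : ℝ) (hk2 : k2 ≠ 0) (t : ℝ) :
    M6 k1 k2 (X2 + t / k2^4, t)
      = (4*(k1^2-k2^2)^2*(k2^4-k1^4)*X2)*t
        + (k1^6*k2^2+6*k1^4*k2^4+k1^2*k2^6 - 4*k1^4*k2^4*(k1^2-k2^2)^2*X2^2) := by
  simp only [M6]; field_simp; ring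

lemma hN1 (k1 k2 X2 : ℝ) (hk2 : k2 ≠ 0) (t : ℝ) :
    N1 k1 k2 (X2 + t / k2^4, t) = 2*k1*(k1^2-k2^2)*k2^4*X2 := by
  simp only [N1]; field_simp; ring

lemma hN3 (k1 k2 X2 : ℝ) (hk2 : k2 ≠ 0) (t : ℝ) :
    N3 k1 k2 (X2 + t / k2^4, t)
      = (2*(k1^2-k2^2)*(k1^4-k2^4)/k2^3)*t + 2*k2*(k1^2-k2^2)*k1^4*X2 := by
  simp only [N3]; field_simp; ring

lemma hN5 (k1 k2 X2 : ℝ) (hk2 : k2 ≠ 0) (t : ℝ) :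
    N5 k1 k2 (X2 + t / k2^4, t)
      = (2*(k1^2-k2^2)^3*(k1^2+k2^2)/k2^2)*t
        + 2*(k1^2-k2^2)^2*(k1^2+k2^2)*k1^2*k2^2*X2 := by
  simp only [N5]; field_simp; ring

lemma hN6 (k1 k2 X2 : ℝ) (hk2 : k2 ≠ 0) (t : ℝ) :
    N6 k1 k2 (X2 + t / k2^4, t)
      = (4*(k1^2-k2^2)^2*(k1^4-k2^4)*X2)*t
        + (-(k1^6*k2^2+6*k1^4*k2^4+k1^2*k2^6) + 4*k1^4*k2^4*(k1^2-k2^2)^2*X2^2) := by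
  simp only [N6]; field_simp; ring

lemma hA1id (k1 k2 X2 : ℝ) (hk2 : k2 ≠ 0) (t : ℝ) :
    A1 k1 k2 (X2 + t / k2^4, t)
      = 4*(k1^2-k2^2)^2 * ((M1 k1 k2 (X2 + t / k2^4, t))^2
          + (M1 k1 k2 (X2 + t / k2^4, t)) * hA k1 k2 X2 t + rA k1 k2 X2 t) := by
  have hp := Real.sin_sq_add_cos_sq (th1 k1 (X2 + t / k2^4, t))
  simp only [A1, hA, rA, wA, zA, thA, thB]
  rw [hM3 k1 k2 X2 hk2 t]
  linear_combination (4*(k1^2-k2^2)^2*(M1 k1 k2 (X2 + t / k2^4, t))^2) * hp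

lemma hB1id (k1 k2 X2 : ℝ) (t : ℝ) :
    B1 k1 k2 (X2 + t / k2^4, t)
      = (M5 k1 k2 (X2 + t / k2^4, t))^2 + (M6 k1 k2 (X2 + t / k2^4, t))^2
        + (M5 k1 k2 (X2 + t / k2^4, t)) * hBf1 k1 k2 X2 t
        + (M6 k1 k2 (X2 + t / k2^4, t)) * hBf2 k1 k2 X2 t + rB k1 k2 X2 t := by
  simp only [B1, hBf1, hBf2, rB, thA, thB]
  ring

lemma hA2id (k1 k2 X2 : ℝ) (hk2 : k2 ≠ 0) (t : ℝ) :
    A2 k1 k2 (X2 + t / k2^4, t)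
      = 4*(k1^2-k2^2)^2 * ((N3 k1 k2 (X2 + t / k2^4, t))^2
          + (N3 k1 k2 (X2 + t / k2^4, t)) * hC k1 k2 X2 t + rC k1 k2 X2 t) := by
  have hp := Real.sin_sq_add_cos_sq (th2 k2 (X2 + t / k2^4, t))
  simp only [A2, hC, rC, wC, zC, thA, thB]
  rw [hN1 k1 k2 X2 hk2 t]
  linear_combination (4*(k1^2-k2^2)^2*(N3 k1 k2 (X2 + t / k2^4, t))^2) * hp

lemma hB2id (k1 k2 X2 : ℝ) (t : ℝ) :
    B2 k1 k2 (X2 + t / k2^4, t)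
      = (N5 k1 k2 (X2 + t / k2^4, t))^2 + (N6 k1 k2 (X2 + t / k2^4, t))^2
        + (N5 k1 k2 (X2 + t / k2^4, t)) * hDf1 k1 k2 X2 t
        + (N6 k1 k2 (X2 + t / k2^4, t)) * hDf2 k1 k2 X2 t + rD k1 k2 X2 t := by
  simp only [B2, hDf1, hDf2, rD, thA, thB]
  ring

lemma tendA1 (k1 k2 X2 : ℝ) (hk2 : k2 ≠ 0)
    (l : Filter ℝ) (hinv : Tendsto (fun t : ℝ => t⁻¹) l (nhds 0)) (hne : ∀ᶠ t in l, t ≠ 0) :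
    Tendsto (fun t => A1 k1 k2 (X2 + t / k2^4, t) / t^2) l
      (nhds (4*(k1^2-k2^2)^2 * ((2*(k1^2-k2^2)*(k1^4-k2^4)/k2)^2 + (0:ℝ)^2))) := by
  have key := shape_tendsto l hinv hne
    (2*(k1^2-k2^2)*(k1^4-k2^4)/k2) (2*k2^3*(k1^2-k2^2)*k1^4*X2) 0 0
    _ 0 _ (hA k1 k2 X2) (fun _ => (0:ℝ)) (rA k1 k2 X2)
    (hA_bound k1 k2 X2) (fun t => by simp) (rA_bound k1 k2 X2)
  have key2 := key.const_mul (4*(k1^2-k2^2)^2)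
  refine key2.congr fun t => ?_
  rw [hA1id k1 k2 X2 hk2 t, hM1 k1 k2 X2 hk2 t]
  ring

lemma tendB1 (k1 k2 X2 : ℝ) (hk2 : k2 ≠ 0)
    (l : Filter ℝ) (hinv : Tendsto (fun t : ℝ => t⁻¹) l (nhds 0)) (hne : ∀ᶠ t in l, t ≠ 0) :
    Tendsto (fun t => B1 k1 k2 (X2 + t / k2^4, t) / t^2) l
      (nhds ((2*(k1^2-k2^2)^3*(k1^2+k2^2)/k2^2)^2 + (4*(k1^2-k2^2)^2*(k2^4-k1^4)*X2)^2)) := by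
  have key := shape_tendsto l hinv hne
    (2*(k1^2-k2^2)^3*(k1^2+k2^2)/k2^2) (2*(k1^2-k2^2)^2*(k1^2+k2^2)*k1^2*k2^2*X2)
    (4*(k1^2-k2^2)^2*(k2^4-k1^4)*X2)
    (k1^6*k2^2+6*k1^4*k2^4+k1^2*k2^6 - 4*k1^4*k2^4*(k1^2-k2^2)^2*X2^2)
    _ _ _ (hBf1 k1 k2 X2) (hBf2 k1 k2 X2) (rB k1 k2 X2)
    (hBf1_bound k1 k2 X2) (hBf2_bound k1 k2 X2) (rB_bound k1 k2 X2)
  refine key.congr fun t => ?_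
  rw [hB1id k1 k2 X2 t, hM5 k1 k2 X2 hk2 t, hM6 k1 k2 X2 hk2 t]

lemma tendA2 (k1 k2 X2 : ℝ) (hk2 : k2 ≠ 0)
    (l : Filter ℝ) (hinv : Tendsto (fun t : ℝ => t⁻¹) l (nhds 0)) (hne : ∀ᶠ t in l, t ≠ 0) :
    Tendsto (fun t => A2 k1 k2 (X2 + t / k2^4, t) / t^2) l
      (nhds (4*(k1^2-k2^2)^2 * ((2*(k1^2-k2^2)*(k1^4-k2^4)/k2^3)^2 + (0:ℝ)^2))) := by
  have key := shape_tendsto l hinv hne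
    (2*(k1^2-k2^2)*(k1^4-k2^4)/k2^3) (2*k2*(k1^2-k2^2)*k1^4*X2) 0 0
    _ 0 _ (hC k1 k2 X2) (fun _ => (0:ℝ)) (rC k1 k2 X2)
    (hC_bound k1 k2 X2) (fun t => by simp) (rC_bound k1 k2 X2)
  have key2 := key.const_mul (4*(k1^2-k2^2)^2)
  refine key2.congr fun t => ?_
  rw [hA2id k1 k2 X2 hk2 t, hN3 k1 k2 X2 hk2 t]
  ring

lemma tendB2 (k1 k2 X2 : ℝ) (hk2 : k2 ≠ 0)
    (l : Filter ℝ) (hinv : Tendsto (fun t : ℝ => t⁻¹) l (nhds 0)) (hne : ∀ᶠ t in l, t ≠ 0) :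
    Tendsto (fun t => B2 k1 k2 (X2 + t / k2^4, t) / t^2) l
      (nhds ((2*(k1^2-k2^2)^3*(k1^2+k2^2)/k2^2)^2 + (4*(k1^2-k2^2)^2*(k1^4-k2^4)*X2)^2)) := by
  have key := shape_tendsto l hinv hne
    (2*(k1^2-k2^2)^3*(k1^2+k2^2)/k2^2) (2*(k1^2-k2^2)^2*(k1^2+k2^2)*k1^2*k2^2*X2)
    (4*(k1^2-k2^2)^2*(k1^4-k2^4)*X2)
    (-(k1^6*k2^2+6*k1^4*k2^4+k1^2*k2^6) + 4*k1^4*k2^4*(k1^2-k2^2)^2*X2^2)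
    _ _ _ (hDf1 k1 k2 X2) (hDf2 k1 k2 X2) (rD k1 k2 X2)
    (hDf1_bound k1 k2 X2) (hDf2_bound k1 k2 X2) (rD_bound k1 k2 X2)
  refine key.congr fun t => ?_
  rw [hB2id k1 k2 X2 t, hN5 k1 k2 X2 hk2 t, hN6 k1 k2 X2 hk2 t]

lemma denom_ne (k1 k2 X2 : ℝ) (hk1 : k1 ≠ 0) (hk2 : k2 ≠ 0) (hkk : k1 ^ 2 ≠ k2 ^ 2) (s : ℝ) :
    (2*(k1^2-k2^2)^3*(k1^2+k2^2)/k2^2)^2 + (4*(k1^2-k2^2)^2*s*X2)^2 ≠ 0 := by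
  have hsub : k1^2 - k2^2 ≠ 0 := sub_ne_zero.mpr hkk
  have hks : k1^2 + k2^2 ≠ 0 := by positivity
  have hm5 : (2*(k1^2-k2^2)^3*(k1^2+k2^2)/k2^2) ≠ 0 :=
    div_ne_zero (mul_ne_zero (mul_ne_zero two_ne_zero (pow_ne_zero 3 hsub)) hks)
      (pow_ne_zero 2 hk2)
  have h1 : 0 < (2*(k1^2-k2^2)^3*(k1^2+k2^2)/k2^2)^2 :=
    lt_of_le_of_ne (sq_nonneg _) (Ne.symm (pow_ne_zero 2 hm5))
  have h2 := sq_nonneg (4*(k1^2-k2^2)^2*s*X2)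
  exact ne_of_gt (by linarith)

lemma lineF1 (k1 k2 : ℝ) (hk1 : k1 ≠ 0) (hk2 : k2 ≠ 0) (hkk : k1 ^ 2 ≠ k2 ^ 2) (X2 : ℝ)
    (l : Filter ℝ) (hinv : Tendsto (fun t : ℝ => t⁻¹) l (nhds 0)) (hne : ∀ᶠ t in l, t ≠ 0) :
    Tendsto (fun t : ℝ => F1 k1 k2 (X2 + t / k2 ^ 4, t)) l
      (nhds (4 * k2 ^ 2 / (1 + 4 * k2 ^ 4 * X2 ^ 2))) := by
  have hb2 : (2*(k1^2-k2^2)^3*(k1^2+k2^2)/k2^2)^2 + (4*(k1^2-k2^2)^2*(k2^4-k1^4)*X2)^2 ≠ 0 := by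
    exact denom_ne k1 k2 X2 hk1 hk2 hkk (k2^4-k1^4)
  have TT := (tendA1 k1 k2 X2 hk2 l hinv hne).div (tendB1 k1 k2 X2 hk2 l hinv hne) hb2
  have hsub : k1^2 - k2^2 ≠ 0 := sub_ne_zero.mpr hkk
  have hks : k1^2 + k2^2 ≠ 0 := by positivity
  have hd : (1+4*k2^4*X2^2) ≠ 0 := by positivity
  have hval : (4*(k1^2-k2^2)^2 * ((2*(k1^2-k2^2)*(k1^4-k2^4)/k2)^2 + (0:ℝ)^2))
      / ((2*(k1^2-k2^2)^3*(k1^2+k2^2)/k2^2)^2 + (4*(k1^2-k2^2)^2*(k2^4-k1^4)*X2)^2)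
      = 4 * k2 ^ 2 / (1 + 4 * k2 ^ 4 * X2 ^ 2) := by
    rw [div_eq_div_iff hb2 hd]
    field_simp
    ring
  rw [← hval]
  refine Tendsto.congr' ?_ TT
  filter_upwards [hne] with t ht
  have ht2 : (t:ℝ)^2 ≠ 0 := pow_ne_zero 2 ht
  simp only [F1]
  rcases eq_or_ne (B1 k1 k2 (X2 + t / k2^4, t)) 0 with hB|hB
  · simp [hB]
  · simp only [Pi.div_apply]; rw [div_div_div_cancel_right₀ ht2]

lemma lineF3 (k1 k2 : ℝ) (hk1 : k1 ≠ 0) (hk2 : k2 ≠ 0) (hkk : k1 ^ 2 ≠ k2 ^ 2) (X2 : ℝ)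
    (l : Filter ℝ) (hinv : Tendsto (fun t : ℝ => t⁻¹) l (nhds 0)) (hne : ∀ᶠ t in l, t ≠ 0) :
    Tendsto (fun t : ℝ => F3 k1 k2 (X2 + t / k2 ^ 4, t)) l
      (nhds (4 / (k2 ^ 2 * (1 + 4 * k2 ^ 4 * X2 ^ 2)))) := by
  have hb2 : (2*(k1^2-k2^2)^3*(k1^2+k2^2)/k2^2)^2 + (4*(k1^2-k2^2)^2*(k1^4-k2^4)*X2)^2 ≠ 0 := by
    exact denom_ne k1 k2 X2 hk1 hk2 hkk (k1^4-k2^4)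
  have TT := (tendA2 k1 k2 X2 hk2 l hinv hne).div (tendB2 k1 k2 X2 hk2 l hinv hne) hb2
  have hsub : k1^2 - k2^2 ≠ 0 := sub_ne_zero.mpr hkk
  have hks : k1^2 + k2^2 ≠ 0 := by positivity
  have hd : (k2 ^ 2 * (1 + 4 * k2 ^ 4 * X2 ^ 2)) ≠ 0 := by positivity
  have hval : (4*(k1^2-k2^2)^2 * ((2*(k1^2-k2^2)*(k1^4-k2^4)/k2^3)^2 + (0:ℝ)^2))
      / ((2*(k1^2-k2^2)^3*(k1^2+k2^2)/k2^2)^2 + (4*(k1^2-k2^2)^2*(k1^4-k2^4)*X2)^2)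
      = 4 / (k2 ^ 2 * (1 + 4 * k2 ^ 4 * X2 ^ 2)) := by
    rw [div_eq_div_iff hb2 hd]
    field_simp
    ring
  rw [← hval]
  refine Tendsto.congr' ?_ TT
  filter_upwards [hne] with t ht
  have ht2 : (t:ℝ)^2 ≠ 0 := pow_ne_zero 2 ht
  simp only [F3]
  rcases eq_or_ne (B2 k1 k2 (X2 + t / k2^4, t)) 0 with hB|hB
  · simp [hB]
  · simp only [Pi.div_apply]; rw [div_div_div_cancel_right₀ ht2]

end NMTaux

/-- Proposition 4.1 (k2-frame asymptotics): along `x = X2 + t/k2⁴`, the squared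
envelopes of the algebraic two-soliton tend to the one-soliton profiles as
`t → ±∞`. -/
theorem algebraicTwoSoliton_asymptotics_k2_frame (k1 k2 : ℝ)
    (hk1 : k1 ≠ 0) (hk2 : k2 ≠ 0) (hkk : k1 ^ 2 ≠ k2 ^ 2) (X2 : ℝ) :
    (Tendsto (fun t : ℝ => F1 k1 k2 (X2 + t / k2 ^ 4, t)) atTop
        (nhds (4 * k2 ^ 2 / (1 + 4 * k2 ^ 4 * X2 ^ 2))) ∧
      Tendsto (fun t : ℝ => F1 k1 k2 (X2 + t / k2 ^ 4, t)) atBot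
        (nhds (4 * k2 ^ 2 / (1 + 4 * k2 ^ 4 * X2 ^ 2)))) ∧
    (Tendsto (fun t : ℝ => F3 k1 k2 (X2 + t / k2 ^ 4, t)) atTop
        (nhds (4 / (k2 ^ 2 * (1 + 4 * k2 ^ 4 * X2 ^ 2)))) ∧
      Tendsto (fun t : ℝ => F3 k1 k2 (X2 + t / k2 ^ 4, t)) atBot
        (nhds (4 / (k2 ^ 2 * (1 + 4 * k2 ^ 4 * X2 ^ 2))))) := by
  refine ⟨⟨?_, ?_⟩, ?_, ?_⟩
  · exact NMTaux.lineF1 k1 k2 hk1 hk2 hkk X2 atTop tendsto_inv_atTop_zero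
      (eventually_ne_atTop 0)
  · exact NMTaux.lineF1 k1 k2 hk1 hk2 hkk X2 atBot NMTaux.tendsto_inv_atBot_zero'
      (eventually_ne_atBot 0)
  · exact NMTaux.lineF3 k1 k2 hk1 hk2 hkk X2 atTop tendsto_inv_atTop_zero
      (eventually_ne_atTop 0)
  · exact NMTaux.lineF3 k1 k2 hk1 hk2 hkk X2 atBot NMTaux.tendsto_inv_atBot_zero'
      (eventually_ne_atBot 0)
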